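/- Constant-factor equivalence of the CCZ gadget and the 2-local iSWAP construction on three qubits: let T_CCZ be the symmetric 8×8 real matrix with rows (1,0,0,0,0,0,0,0), (0, 1/2, 0, 0, 1/(6√3), 0, 1/(6√3), 1/18), (0, 0, 1/2, 0, 1/(6√3), 1/(6√3), 0, 1/18), (0, 0, 0, 1/2, 0, 1/(6√3), 1/(6√3), 1/18), (0, 1/(6√3), 1/(6√3), 0, 4/9, 1/18, 1/18, 1/(3√3)), (0, 0, 1/(6√3), 1/(6√3), 1/18, 4/9, 1/18, 1/(3√3)), (0, 1/(6√3), 0, 1/(6√3), 1/18, 1/18, 4/9, 1/(3√3)), (0, 1/18, 1/18, 1/18, 1/(3√3), 1/(3√3), 1/(3√3), 11/18), and let T_iSWAP' be the symmetric 8×8 real matrix with rows (1,0,0,0,0,0,0,0), (0, 1/3, 1/9, 1/9, 2/(9√3), 0, 2/(9√3), 0), (0, 1/9, 1/3, 1/9, 2/(9√3), 2/(9√3), 0, 0), (0, 1/9, 1/9, 1/3, 0, 2/(9√3), 2/(9√3), 0), (0, 2/(9√3), 2/(9√3), 0, 5/27, 1/9, 1/9, 4/(9√3)), (0, 0, 2/(9√3),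 2/(9√3), 1/9, 5/27, 1/9, 4/(9√3)), (0, 2/(9√3), 0, 2/(9√3), 1/9, 1/9, 5/27, 4/(9√3)), (0, 0, 0, 0, 4/(9√3), 4/(9√3), 4/(9√3), 5/9). Then both (19/12)(I − T_CCZ) − (I − T_iSWAP') and (I − T_iSWAP') − (4/5)(I − T_CCZ) are positive semidefinite; i.e. (4/5)(I − T_CCZ) ⪯ (I − T_iSWAP') ⪯ (19/12)(I − T_CCZ) in the Loewner order. -/

import Mathlib

open Matrix

/-- Matrix representation (in the orthonormal basis `{u₀,u₁}^⊗3`) of the second moment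
operator of the 3-local ironed gadget built from the `CCZ` gate (Eq. (eq:CCZ)). -/
noncomputable def TCCZ : Matrix (Fin 8) (Fin 8) ℝ :=
  !![1, 0, 0, 0, 0, 0, 0, 0;
     0, 1/2, 0, 0, 1/(6*Real.sqrt 3), 0, 1/(6*Real.sqrt 3), 1/18;
     0, 0, 1/2, 0, 1/(6*Real.sqrt 3), 1/(6*Real.sqrt 3), 0, 1/18;
     0, 0, 0, 1/2, 0, 1/(6*Real.sqrt 3), 1/(6*Real.sqrt 3), 1/18;
     0, 1/(6*Real.sqrt 3), 1/(6*Real.sqrt 3), 0, 4/9, 1/18, 1/18, 1/(3*Real.sqrt 3);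
     0, 0, 1/(6*Real.sqrt 3), 1/(6*Real.sqrt 3), 1/18, 4/9, 1/18, 1/(3*Real.sqrt 3);
     0, 1/(6*Real.sqrt 3), 0, 1/(6*Real.sqrt 3), 1/18, 1/18, 4/9, 1/(3*Real.sqrt 3);
     0, 1/18, 1/18, 1/18, 1/(3*Real.sqrt 3), 1/(3*Real.sqrt 3), 1/(3*Real.sqrt 3), 11/18]

/-- Matrix representation of `(1/3)(T_{2,(i,j)}^{iSWAP} + T_{2,(j,k)}^{iSWAP} +
T_{2,(i,k)}^{iSWAP})`, the average of the three 2-local iSWAP gadget moment operators on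
three qubits (Eq. (eq:iSWAP-CCZ)). -/
noncomputable def TiSWAP3 : Matrix (Fin 8) (Fin 8) ℝ :=
  !![1, 0, 0, 0, 0, 0, 0, 0;
     0, 1/3, 1/9, 1/9, 2/(9*Real.sqrt 3), 0, 2/(9*Real.sqrt 3), 0;
     0, 1/9, 1/3, 1/9, 2/(9*Real.sqrt 3), 2/(9*Real.sqrt 3), 0, 0;
     0, 1/9, 1/9, 1/3, 0, 2/(9*Real.sqrt 3), 2/(9*Real.sqrt 3), 0;
     0, 2/(9*Real.sqrt 3), 2/(9*Real.sqrt 3), 0, 5/27, 1/9, 1/9, 4/(9*Real.sqrt 3);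
     0, 0, 2/(9*Real.sqrt 3), 2/(9*Real.sqrt 3), 1/9, 5/27, 1/9, 4/(9*Real.sqrt 3);
     0, 2/(9*Real.sqrt 3), 0, 2/(9*Real.sqrt 3), 1/9, 1/9, 5/27, 4/(9*Real.sqrt 3);
     0, 0, 0, 0, 4/(9*Real.sqrt 3), 4/(9*Real.sqrt 3), 4/(9*Real.sqrt 3), 5/9]

namespace CCZiSWAPAux

@[simp] lemma cons_val_five {α : Type*} {m : ℕ} (x : α) (u : Fin m.succ.succ.succ.succ.succ → α) :
    vecCons x u 5 = vecHead (vecTail (vecTail (vecTail (vecTail u)))) := rfl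
@[simp] lemma cons_val_six {α : Type*} {m : ℕ} (x : α) (u : Fin m.succ.succ.succ.succ.succ.succ → α) :
    vecCons x u 6 = vecHead (vecTail (vecTail (vecTail (vecTail (vecTail u))))) := rfl
@[simp] lemma cons_val_seven {α : Type*} {m : ℕ} (x : α) (u : Fin m.succ.succ.succ.succ.succ.succ.succ → α) :
    vecCons x u 7 = vecHead (vecTail (vecTail (vecTail (vecTail (vecTail (vecTail u)))))) := rfl

noncomputable def L1 : Matrix (Fin 8) (Fin 8) ℝ :=
  !![1, 0, 0, 0, 0, 0, 0, 0;
     0, 1, 0, 0, 0, 0, 0, 0;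
     0, 8/9, 1, 0, 0, 0, 0, 0;
     0, 8/9, 8/17, 1, 0, 0, 0, 0;
     0, -Real.sqrt 3/9, -Real.sqrt 3/17, 16*Real.sqrt 3/25, 1, 0, 0, 0;
     0, 0, -9*Real.sqrt 3/17, -9*Real.sqrt 3/25, 1, 1, 0, 0;
     0, -Real.sqrt 3/9, 8*Real.sqrt 3/17, -9*Real.sqrt 3/25, 1, 0, 1, 0;
     0, -19/27, -19/51, -19/75, -Real.sqrt 3, 0, 0, 1]

noncomputable def D1 : Matrix (Fin 8) (Fin 8) ℝ :=
  Matrix.diagonal ![0, 1/8, 17/648, 25/1224, 47/1350, 0, 0, 0]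

noncomputable def L2 : Matrix (Fin 8) (Fin 8) ℝ :=
  !![1, 0, 0, 0, 0, 0, 0, 0;
     0, 1, 0, 0, 0, 0, 0, 0;
     0, -5/12, 1, 0, 0, 0, 0, 0;
     0, -5/12, -5/7, 1, 0, 0, 0, 0;
     0, -Real.sqrt 3/9, -4*Real.sqrt 3/21, -20*Real.sqrt 3/51, 1, 0, 0, 0;
     0, 0, -16*Real.sqrt 3/119, -8*Real.sqrt 3/17, -1/2, 1, 0, 0;
     0, -Real.sqrt 3/9, -20*Real.sqrt 3/357, -8*Real.sqrt 3/17, -1/2, -1, 1, 0;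
     0, 1/6, 2/7, 1, 0, 0, 0, 1]

noncomputable def D2 : Matrix (Fin 8) (Fin 8) ℝ :=
  Matrix.diagonal ![0, 4/15, 119/540, 34/315, 658/2295, 329/1530, 0, 0]

set_option maxHeartbeats 4000000 in
lemma eq1 : (19/12 : ℝ) • (1 - TCCZ) - (1 - TiSWAP3) = L1 * D1 * L1ᴴ := by
  have h3 : Real.sqrt 3 * Real.sqrt 3 = 3 := Real.mul_self_sqrt (by norm_num)
  have h2 : Real.sqrt 3 ^ 2 = 3 := Real.sq_sqrt (by norm_num)
  have h3' : Real.sqrt 3 ^ 3 = 3 * Real.sqrt 3 := by rw [pow_succ, h2]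
  have h4 : Real.sqrt 3 ^ 4 = 9 := by rw [show (4:ℕ)=2*2 from rfl, pow_mul, h2]; norm_num
  have hne : Real.sqrt 3 ≠ 0 := by positivity
  ext i j
  fin_cases i <;> fin_cases j <;>
    · simp only [TCCZ, TiSWAP3, L1, D1, Matrix.mul_assoc, Matrix.mul_apply,
        Matrix.diagonal_mul, Matrix.conjTranspose_apply, star_trivial, Fin.sum_univ_eight,
        Matrix.sub_apply, Matrix.smul_apply, Matrix.one_apply, smul_eq_mul,
        Matrix.cons_val', Matrix.cons_val_zero, Matrix.cons_val_one, Matrix.cons_val_two,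
        Matrix.cons_val_three, Matrix.cons_val_four, cons_val_five, cons_val_six, cons_val_seven,
        Matrix.head_cons, Matrix.tail_cons, Matrix.head_fin_const, Matrix.cons_val_fin_one,
        Matrix.empty_val', Matrix.of_apply, Matrix.vecHead, Matrix.vecTail, Function.comp]
      norm_num [Fin.ext_iff, Matrix.cons_val_two, Matrix.cons_val_three, Matrix.cons_val_four, Matrix.head_cons, Matrix.tail_cons]
      try field_simp
      try ring_nf
      try simp only [h2, h3', h4]
      try ring_nf
      try norm_num

set_option maxHeartbeats 4000000 in
lemma eq2 : (1 - TiSWAP3) - (4/5 : ℝ) • (1 - TCCZ) = L2 * D2 * L2ᴴ := by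
  have h3 : Real.sqrt 3 * Real.sqrt 3 = 3 := Real.mul_self_sqrt (by norm_num)
  have h2 : Real.sqrt 3 ^ 2 = 3 := Real.sq_sqrt (by norm_num)
  have h3' : Real.sqrt 3 ^ 3 = 3 * Real.sqrt 3 := by rw [pow_succ, h2]
  have h4 : Real.sqrt 3 ^ 4 = 9 := by rw [show (4:ℕ)=2*2 from rfl, pow_mul, h2]; norm_num
  have hne : Real.sqrt 3 ≠ 0 := by positivity
  ext i j
  fin_cases i <;> fin_cases j <;>
    · simp only [TCCZ, TiSWAP3, L2, D2, Matrix.mul_assoc, Matrix.mul_apply,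
        Matrix.diagonal_mul, Matrix.conjTranspose_apply, star_trivial, Fin.sum_univ_eight,
        Matrix.sub_apply, Matrix.smul_apply, Matrix.one_apply, smul_eq_mul,
        Matrix.cons_val', Matrix.cons_val_zero, Matrix.cons_val_one, Matrix.cons_val_two,
        Matrix.cons_val_three, Matrix.cons_val_four, cons_val_five, cons_val_six, cons_val_seven,
        Matrix.head_cons, Matrix.tail_cons, Matrix.head_fin_const, Matrix.cons_val_fin_one,
        Matrix.empty_val', Matrix.of_apply, Matrix.vecHead, Matrix.vecTail, Function.comp]
      norm_num [Fin.ext_iff, Matrix.cons_val_two, Matrix.cons_val_three, Matrix.cons_val_four, Matrix.head_cons, Matrix.tail_cons]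
      try field_simp
      try ring_nf
      try simp only [h2, h3', h4]
      try ring_nf
      try norm_num

lemma hD1 : D1.PosSemidef := by
  rw [D1, Matrix.posSemidef_diagonal_iff]
  intro i
  fin_cases i <;> norm_num

lemma hD2 : D2.PosSemidef := by
  rw [D2, Matrix.posSemidef_diagonal_iff]
  intro i
  fin_cases i <;> norm_num

end CCZiSWAPAux

open CCZiSWAPAux in
/-- **Constant-factor equivalence of the CCZ gadget and the 2-local iSWAP construction on
three qubits**: both `(19/12)(I − T_CCZ) − (I − T_iSWAP')` and
`(I − T_iSWAP') − (4/5)(I − T_CCZ)` are positive semidefinite, i.e.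
`(4/5)(I − T_CCZ) ⪯ (I − T_iSWAP') ⪯ (19/12)(I − T_CCZ)` in the Loewner order. -/
theorem CCZ_vs_iSWAP_constant_factor :
    ((19/12 : ℝ) • (1 - TCCZ) - (1 - TiSWAP3)).PosSemidef ∧
    ((1 - TiSWAP3) - (4/5 : ℝ) • (1 - TCCZ)).PosSemidef := by
  constructor
  · rw [eq1]; exact hD1.mul_mul_conjTranspose_same L1
  · rw [eq2]; exact hD2.mul_mul_conjTranspose_same L2
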